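/- For every integer r ≥ 1 there exists N such that for all n ≥ N the following holds: for every nonempty X ⊆ [2,n], every MLCIF in ([n] choose r) which is optimal for X has rank one or two. -/

import Mathlib

open Finset

/-- The family of all `r`-element subsets of `[n] = {1, …, n}`. -/
def chooseFam (n r : ℕ) : Finset (Finset ℕ) := (Finset.Icc 1 n).powersetCard r

/-- A family of sets is intersecting if any two members meet. -/
def IntersectingFam (𝒜 : Finset (Finset ℕ)) : Prop :=
  ∀ A ∈ 𝒜, ∀ B ∈ 𝒜, (A ∩ B).Nonempty

/-- `DomLE B A` : writing the elements in increasing order, the `i`-th element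
of `B` is at most the `i`-th element of `A` (and they have the same size). -/
def DomLE (B A : Finset ℕ) : Prop :=
  B.card = A.card ∧
  ∀ (i : ℕ) (hB : i < (B.sort (· ≤ ·)).length) (hA : i < (A.sort (· ≤ ·)).length),
    (B.sort (· ≤ ·)).get ⟨i, hB⟩ ≤ (A.sort (· ≤ ·)).get ⟨i, hA⟩

/-- A family of `r`-subsets of `[n]` is left-compressed if it is downward closed
under the domination order. -/
def LeftCompressed (n r : ℕ) (𝒜 : Finset (Finset ℕ)) : Prop :=
  ∀ A ∈ 𝒜, ∀ B ∈ chooseFam n r, DomLE B A → B ∈ 𝒜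

/-- A left-compressed intersecting family in `([n] choose r)`. -/
def IsLCIF (n r : ℕ) (𝒜 : Finset (Finset ℕ)) : Prop :=
  𝒜 ⊆ chooseFam n r ∧ IntersectingFam 𝒜 ∧ LeftCompressed n r 𝒜

/-- A maximal left-compressed intersecting family. -/
def IsMLCIF (n r : ℕ) (𝒜 : Finset (Finset ℕ)) : Prop :=
  IsLCIF n r 𝒜 ∧ ∀ ℬ : Finset (Finset ℕ), IsLCIF n r ℬ → 𝒜 ⊆ ℬ → ℬ = 𝒜

/-- The number of members of `𝒜` hitting `X`. -/
def hit (X : Finset ℕ) (𝒜 : Finset (Finset ℕ)) : ℕ :=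
  (𝒜.filter fun A => (A ∩ X).Nonempty).card

/-- An MLCIF optimal for `X`: it maximises `hit X` among all MLCIFs. -/
def OptimalMLCIF (n r : ℕ) (X : Finset ℕ) (𝒜 : Finset (Finset ℕ)) : Prop :=
  IsMLCIF n r 𝒜 ∧ ∀ ℬ : Finset (Finset ℕ), IsMLCIF n r ℬ → hit X ℬ ≤ hit X 𝒜

/-- An LCIF optimal for `X` among all LCIFs. -/
def OptimalLCIF (n r : ℕ) (X : Finset ℕ) (𝒜 : Finset (Finset ℕ)) : Prop :=
  IsLCIF n r 𝒜 ∧ ∀ ℬ : Finset (Finset ℕ), IsLCIF n r ℬ → hit X ℬ ≤ hit X 𝒜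

/-- The `t`-adjusted Hilton–Milner family. -/
def AHM (n r t : ℕ) : Finset (Finset ℕ) :=
  (chooseFam n r).filter fun A =>
    (1 ∈ A ∧ (A ∩ Finset.Icc 2 t).Nonempty) ∨ Finset.Icc 2 t ⊆ A

/-- The star: all `r`-subsets of `[n]` containing `1`. -/
def starFam (n r : ℕ) : Finset (Finset ℕ) :=
  (chooseFam n r).filter fun A => 1 ∈ A

/-- `G ⊆ [n]` is a potential generator of `𝒜`: every `A ∈ ([n] choose r)`
containing `G` lies in `𝒜`. -/
def PotGen (n r : ℕ) (𝒜 : Finset (Finset ℕ)) (G : Finset ℕ) : Prop :=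
  G ⊆ Finset.Icc 1 n ∧ ∀ A ∈ chooseFam n r, G ⊆ A → A ∈ 𝒜

open Classical in
/-- The canonical generating family: all inclusion-minimal potential generators. -/
noncomputable def canonGen (n r : ℕ) (𝒜 : Finset (Finset ℕ)) : Finset (Finset ℕ) :=
  (Finset.Icc 1 n).powerset.filter fun G =>
    PotGen n r 𝒜 G ∧ ∀ G' ⊆ G, PotGen n r 𝒜 G' → G' = G

/-- The rank of `𝒜`: the smallest size of a generator. -/
noncomputable def rankFam (n r : ℕ) (𝒜 : Finset (Finset ℕ)) : ℕ :=
  sInf {k : ℕ | ∃ G ∈ canonGen n r 𝒜, G.card = k}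

/-- The family generated by `𝒢` with respect to `n` and `r`. -/
def genFam (n r : ℕ) (𝒢 : Finset (Finset ℕ)) : Finset (Finset ℕ) :=
  (chooseFam n r).filter fun A => ∃ G ∈ 𝒢, G ⊆ A

/-- `𝒜 ∈ I_j`: an MLCIF of rank two whose generators of size two are precisely
`{1,2}, {1,3}, …, {1,j}`. -/
noncomputable def MemI (n r j : ℕ) (𝒜 : Finset (Finset ℕ)) : Prop :=
  IsMLCIF n r 𝒜 ∧ rankFam n r 𝒜 = 2 ∧
    (canonGen n r 𝒜).filter (fun G => G.card = 2) =
      (Finset.Icc 2 j).image fun i => ({1, i} : Finset ℕ)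


private lemma mem_chooseFam {n r : ℕ} {A : Finset ℕ} :
    A ∈ chooseFam n r ↔ A ⊆ Finset.Icc 1 n ∧ A.card = r := Finset.mem_powersetCard

private lemma sort_get_mem (S : Finset ℕ) {i : ℕ} (hi : i < (S.sort (· ≤ ·)).length) :
    (S.sort (· ≤ ·)).get ⟨i, hi⟩ ∈ S :=
  (Finset.mem_sort _).1 (List.get_mem _ ⟨i, hi⟩)

private lemma sort_get_lt (S : Finset ℕ) {i j : ℕ} (hi : i < (S.sort (· ≤ ·)).length)
    (hj : j < (S.sort (· ≤ ·)).length) (hij : i < j) :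
    (S.sort (· ≤ ·)).get ⟨i, hi⟩ < (S.sort (· ≤ ·)).get ⟨j, hj⟩ :=
  (Finset.sortedLT_sort S) (show (⟨i, hi⟩ : Fin _) < ⟨j, hj⟩ from hij)

private lemma sort_get_le (S : Finset ℕ) {i j : ℕ} (hi : i < (S.sort (· ≤ ·)).length)
    (hj : j < (S.sort (· ≤ ·)).length) (hij : i ≤ j) :
    (S.sort (· ≤ ·)).get ⟨i, hi⟩ ≤ (S.sort (· ≤ ·)).get ⟨j, hj⟩ :=
  (S.pairwise_sort (· ≤ ·)).rel_get_of_le hij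

private lemma one_le_sort_get {n : ℕ} {S : Finset ℕ} (hS : S ⊆ Finset.Icc 1 n) {i : ℕ}
    (hi : i < (S.sort (· ≤ ·)).length) : 1 ≤ (S.sort (· ≤ ·)).get ⟨i, hi⟩ :=
  (Finset.mem_Icc.1 (hS (sort_get_mem S hi))).1

private lemma sort_get_zero_le {S : Finset ℕ} {x : ℕ} (hx : x ∈ S)
    (h0 : 0 < (S.sort (· ≤ ·)).length) :
    (S.sort (· ≤ ·)).get ⟨0, h0⟩ ≤ x := by
  obtain ⟨i, hi⟩ := List.mem_iff_get.1 ((Finset.mem_sort (α := ℕ) (· ≤ ·)).2 hx)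
  calc (S.sort (· ≤ ·)).get ⟨0, h0⟩ ≤ (S.sort (· ≤ ·)).get i :=
        (S.pairwise_sort (· ≤ ·)).rel_get_of_le (Nat.zero_le _)
    _ = x := hi

private lemma sort_get_one_le {S : Finset ℕ} {x : ℕ} (hx : x ∈ S)
    (h1 : 1 < (S.sort (· ≤ ·)).length)
    (hlt : (S.sort (· ≤ ·)).get ⟨0, by omega⟩ < x) :
    (S.sort (· ≤ ·)).get ⟨1, h1⟩ ≤ x := by
  obtain ⟨i, hi⟩ := List.mem_iff_get.1 ((Finset.mem_sort (α := ℕ) (· ≤ ·)).2 hx)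
  have hi1 : 1 ≤ i.1 := by
    by_contra h
    have h0 : i = ⟨0, by omega⟩ := by
      apply Fin.ext; simp; omega
    rw [h0] at hi
    rw [hi] at hlt
    exact lt_irrefl _ hlt
  calc (S.sort (· ≤ ·)).get ⟨1, h1⟩ ≤ (S.sort (· ≤ ·)).get i :=
        (S.pairwise_sort (· ≤ ·)).rel_get_of_le hi1
    _ = x := hi

private lemma domle_refl (A : Finset ℕ) : DomLE A A :=
  ⟨rfl, fun _ _ _ => le_refl _⟩

private lemma domle_trans {C B A : Finset ℕ} (h1 : DomLE C B) (h2 : DomLE B A) : DomLE C A := by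
  refine ⟨h1.1.trans h2.1, fun i hC hA => ?_⟩
  have hB : i < (B.sort (· ≤ ·)).length := by
    have e1 := h1.1
    rw [Finset.length_sort] at hC ⊢
    omega
  exact le_trans (h1.2 i hC hB) (h2.2 i hB hA)

example : True := trivial

private lemma exists_canonGen {n r : ℕ} {𝒜 : Finset (Finset ℕ)} :
    ∀ G : Finset ℕ, PotGen n r 𝒜 G → ∃ G' ∈ canonGen n r 𝒜, G' ⊆ G := by
  classical
  intro G
  induction G using Finset.strongInduction with
  | _ G ih =>
    intro hG
    by_cases h : ∀ G' ⊆ G, PotGen n r 𝒜 G' → G' = G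
    · exact ⟨G, Finset.mem_filter.2 ⟨Finset.mem_powerset.2 hG.1, hG, h⟩, Finset.Subset.refl G⟩
    · push_neg at h
      obtain ⟨G', hsub, hpg, hne⟩ := h
      obtain ⟨G'', hmem, hsub'⟩ := ih G' (Finset.ssubset_iff_subset_ne.2 ⟨hsub, hne⟩) hpg
      exact ⟨G'', hmem, hsub'.trans hsub⟩

private lemma filter_superset_card_le {n r : ℕ} {T : Finset ℕ} (hT : T ⊆ Finset.Icc 1 n)
    (hTc : T.card = 3) :
    ((chooseFam n r).filter (fun A => T ⊆ A)).card ≤ (n - 3).choose (r - 3) := by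
  classical
  have key : ((chooseFam n r).filter (fun A => T ⊆ A)).card
      ≤ (Finset.powersetCard (r - 3) ((Finset.Icc 1 n) \ T)).card := by
    apply Finset.card_le_card_of_injOn (fun A => A \ T)
    · intro A hA
      obtain ⟨hAcf, hTA⟩ := Finset.mem_filter.1 hA
      obtain ⟨hAsub, hAcard⟩ := mem_chooseFam.1 hAcf
      refine Finset.mem_powersetCard.2 ⟨?_, ?_⟩
      · intro y hy
        rw [Finset.mem_sdiff] at hy ⊢
        exact ⟨hAsub hy.1, hy.2⟩
      · rw [Finset.card_sdiff_of_subset hTA, hAcard, hTc]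
    · intro A1 h1 A2 h2 he
      have hT1 := (Finset.mem_filter.1 (Finset.mem_coe.1 h1)).2
      have hT2 := (Finset.mem_filter.1 (Finset.mem_coe.1 h2)).2
      have he' : A1 \ T = A2 \ T := he
      calc A1 = A1 \ T ∪ T := (Finset.sdiff_union_of_subset hT1).symm
        _ = A2 \ T ∪ T := by rw [he']
        _ = A2 := Finset.sdiff_union_of_subset hT2
  rw [Finset.card_powersetCard, Finset.card_sdiff_of_subset hT, Nat.card_Icc, hTc] at key
  have e : n + 1 - 1 - 3 = n - 3 := by omega
  rwa [e] at key

private lemma isMLCIF_star {n r : ℕ} (hr : 1 ≤ r) (hn : 2 * r ≤ n) :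
    IsMLCIF n r (starFam n r) := by
  classical
  constructor
  · refine ⟨Finset.filter_subset _ _, ?_, ?_⟩
    · intro A hA B hB
      exact ⟨1, Finset.mem_inter.2 ⟨(Finset.mem_filter.1 hA).2, (Finset.mem_filter.1 hB).2⟩⟩
    · intro A hA B hBcf hdom
      obtain ⟨hAcf, h1A⟩ := Finset.mem_filter.1 hA
      refine Finset.mem_filter.2 ⟨hBcf, ?_⟩
      obtain ⟨hAsub, hAcard⟩ := mem_chooseFam.1 hAcf
      obtain ⟨hBsub, hBcard⟩ := mem_chooseFam.1 hBcf
      have h0B : 0 < (B.sort (· ≤ ·)).length := by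
        rw [Finset.length_sort, hBcard]; omega
      have h0A : 0 < (A.sort (· ≤ ·)).length := by
        rw [Finset.length_sort, hAcard]; omega
      have hle : (B.sort (· ≤ ·)).get ⟨0, h0B⟩ ≤ 1 :=
        le_trans (hdom.2 0 h0B h0A) (sort_get_zero_le h1A h0A)
      have hge : 1 ≤ (B.sort (· ≤ ·)).get ⟨0, h0B⟩ := one_le_sort_get hBsub h0B
      have : (B.sort (· ≤ ·)).get ⟨0, h0B⟩ = 1 := by omega
      rw [← this]
      exact sort_get_mem B h0B
  · intro ℬ hℬ hsubℬ
    apply Finset.Subset.antisymm _ hsubℬ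
    intro B hB
    have hBcf := hℬ.1 hB
    obtain ⟨hBsub, hBcard⟩ := mem_chooseFam.1 hBcf
    refine Finset.mem_filter.2 ⟨hBcf, ?_⟩
    by_contra h1B
    have hcard : r - 1 ≤ ((Finset.Icc 2 n) \ B).card := by
      have h1 := Finset.le_card_sdiff B (Finset.Icc 2 n)
      rw [Nat.card_Icc, hBcard] at h1
      omega
    obtain ⟨T, hTsub, hTcard⟩ := Finset.exists_subset_card_eq hcard
    have hT : ∀ t ∈ T, (2 ≤ t ∧ t ≤ n) ∧ t ∉ B := by
      intro t ht
      have := hTsub ht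
      rw [Finset.mem_sdiff, Finset.mem_Icc] at this
      exact this
    have h1T : (1 : ℕ) ∉ T := fun h => by have := hT 1 h; omega
    have hD : insert 1 T ∈ starFam n r := by
      refine Finset.mem_filter.2 ⟨mem_chooseFam.2 ⟨?_, ?_⟩, Finset.mem_insert_self _ _⟩
      · intro y hy
        rcases Finset.mem_insert.1 hy with rfl | hyT
        · rw [Finset.mem_Icc]; omega
        · have := hT y hyT; rw [Finset.mem_Icc]; omega
      · rw [Finset.card_insert_of_notMem h1T, hTcard]; omega
    obtain ⟨y, hy⟩ := hℬ.2.1 _ (hsubℬ hD) B hB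
    rw [Finset.mem_inter] at hy
    rcases Finset.mem_insert.1 hy.1 with rfl | hyT
    · exact h1B hy.2
    · exact (hT y hyT).2 hy.2

private lemma star_hit_lb {n r : ℕ} {X : Finset ℕ} (hr : 2 ≤ r) (hrn : r ≤ n)
    (hX : X ⊆ Finset.Icc 2 n) (hXne : X.Nonempty) :
    (n - 2).choose (r - 2) ≤ hit X (starFam n r) := by
  classical
  obtain ⟨x, hxX⟩ := hXne
  have hx2 := Finset.mem_Icc.1 (hX hxX)
  have hxIcc : {1, x} ⊆ Finset.Icc 1 n := by
    intro y hy
    rcases Finset.mem_insert.1 hy with rfl | hy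
    · rw [Finset.mem_Icc]; omega
    · rw [Finset.mem_singleton] at hy; subst hy; rw [Finset.mem_Icc]; omega
  have hcard2 : ({1, x} : Finset ℕ).card = 2 := by
    rw [Finset.card_insert_of_notMem (by simp; omega), Finset.card_singleton]
  have hPcard : (Finset.powersetCard (r - 2) ((Finset.Icc 1 n) \ {1, x})).card
      = (n - 2).choose (r - 2) := by
    have e : n + 1 - 1 - 2 = n - 2 := by omega
    rw [Finset.card_powersetCard, Finset.card_sdiff_of_subset hxIcc, Nat.card_Icc, hcard2, e]
  rw [← hPcard]
  unfold hit
  apply Finset.card_le_card_of_injOn (fun T => insert 1 (insert x T))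
  · intro T hT
    obtain ⟨hTsub, hTcard⟩ := Finset.mem_powersetCard.1 hT
    have hT' : ∀ t ∈ T, (1 ≤ t ∧ t ≤ n) ∧ ¬(t = 1 ∨ t = x) := by
      intro t ht
      have := hTsub ht
      rw [Finset.mem_sdiff, Finset.mem_Icc] at this
      simpa using this
    have hxT : x ∉ T := fun h => (hT' x h).2 (Or.inr rfl)
    have h1T : (1 : ℕ) ∉ insert x T := by
      rw [Finset.mem_insert]
      rintro (h | h)
      · omega
      · exact (hT' 1 h).2 (Or.inl rfl)
    refine Finset.mem_filter.2 ⟨Finset.mem_filter.2 ⟨mem_chooseFam.2 ⟨?_, ?_⟩,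
        Finset.mem_insert_self _ _⟩, ⟨x, Finset.mem_inter.2 ⟨?_, hxX⟩⟩⟩
    · intro y hy
      rcases Finset.mem_insert.1 hy with rfl | hy
      · rw [Finset.mem_Icc]; omega
      rcases Finset.mem_insert.1 hy with rfl | hy
      · rw [Finset.mem_Icc]; omega
      · have := (hT' y hy).1; rw [Finset.mem_Icc]; omega
    · rw [Finset.card_insert_of_notMem h1T, Finset.card_insert_of_notMem hxT, hTcard]
      omega
    · exact Finset.mem_insert_of_mem (Finset.mem_insert_self _ _)
  · intro T1 h1 T2 h2 he'
    have he : insert 1 (insert x T1) = insert 1 (insert x T2) := he'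
    have hmem : ∀ (T : Finset ℕ), T ∈ Finset.powersetCard (r - 2) ((Finset.Icc 1 n) \ {1, x}) →
        ∀ t ∈ T, t ≠ 1 ∧ t ≠ x := by
      intro T hT t ht
      have := (Finset.mem_powersetCard.1 hT).1 ht
      rw [Finset.mem_sdiff] at this
      have := this.2
      simp at this
      exact this
    have h1' := hmem T1 (Finset.mem_coe.1 h1)
    have h2' := hmem T2 (Finset.mem_coe.1 h2)
    apply Finset.ext
    intro a
    constructor
    · intro ha
      have : a ∈ insert 1 (insert x T2) := by rw [← he]; simp [ha]
      rcases Finset.mem_insert.1 this with rfl | this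
      · exact absurd rfl (h1' _ ha).1
      rcases Finset.mem_insert.1 this with rfl | this
      · exact absurd rfl (h1' _ ha).2
      · exact this
    · intro ha
      have : a ∈ insert 1 (insert x T1) := by rw [he]; simp [ha]
      rcases Finset.mem_insert.1 this with rfl | this
      · exact absurd rfl (h2' _ ha).1
      rcases Finset.mem_insert.1 this with rfl | this
      · exact absurd rfl (h2' _ ha).2
      · exact this

/-- For every `r ≥ 1` and `n` sufficiently large: for every
nonempty `X ⊆ [2,n]`, every MLCIF optimal for `X` has rank one or two. -/
theorem stmt9 :
    ∀ r : ℕ, 1 ≤ r → ∃ N : ℕ, ∀ n : ℕ, N ≤ n →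
      ∀ X : Finset ℕ, X ⊆ Finset.Icc 2 n → X.Nonempty →
        ∀ 𝒜 : Finset (Finset ℕ), OptimalMLCIF n r X 𝒜 →
          rankFam n r 𝒜 = 1 ∨ rankFam n r 𝒜 = 2 := by
  intro r hr
  refine ⟨(2 * r + 3) ^ 4, fun n hn X hX hXne 𝒜 hopt => ?_⟩
  classical
  obtain ⟨⟨⟨hsub, hint, hlc⟩, hmax⟩, hbest⟩ := hopt
  have hM4 : 2 * r + 3 ≤ (2 * r + 3) ^ 4 := Nat.le_self_pow (by norm_num) _
  have hnM : 2 * r + 3 ≤ n := le_trans hM4 hn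
  have hn2r : 2 * r ≤ n := by omega
  have hrn : r ≤ n := by omega
  have hstar := isMLCIF_star hr hn2r
  -- 𝒜 is nonempty
  have hne : 𝒜.Nonempty := by
    rw [Finset.nonempty_iff_ne_empty]
    intro h
    have heq := hmax (starFam n r) hstar.1 (by rw [h]; exact Finset.empty_subset _)
    have hmem : Finset.Icc 1 r ∈ starFam n r := by
      refine Finset.mem_filter.2 ⟨mem_chooseFam.2 ⟨Finset.Icc_subset_Icc_right hrn, ?_⟩, ?_⟩
      · rw [Nat.card_Icc]; omega
      · rw [Finset.mem_Icc]; omega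
    rw [heq, h] at hmem
    exact Finset.notMem_empty _ hmem
  obtain ⟨A0, hA0⟩ := hne
  obtain ⟨hA0sub, hA0card⟩ := mem_chooseFam.1 (hsub hA0)
  have hA0pg : PotGen n r 𝒜 A0 := by
    refine ⟨hA0sub, fun A hA hsubA => ?_⟩
    have hAcard := (mem_chooseFam.1 hA).2
    have : A0 = A := Finset.eq_of_subset_of_card_le hsubA (by omega)
    rwa [← this]
  obtain ⟨G0, hG0mem, hG0sub⟩ := exists_canonGen A0 hA0pg
  have hrankG0 : rankFam n r 𝒜 ≤ G0.card := Nat.sInf_le ⟨G0, hG0mem, rfl⟩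
  have hrankler : rankFam n r 𝒜 ≤ r :=
    le_trans hrankG0 (le_trans (Finset.card_le_card hG0sub) (le_of_eq hA0card))
  have hrank1 : 1 ≤ rankFam n r 𝒜 := by
    rcases Nat.eq_zero_or_pos (rankFam n r 𝒜) with h0 | h
    swap
    · exact h
    exfalso
    rcases Nat.sInf_eq_zero.1 h0 with h0K | hKe
    · obtain ⟨G, hG, hGc⟩ := h0K
      have hGe : G = ∅ := Finset.card_eq_zero.1 hGc
      subst hGe
      have hpg : PotGen n r 𝒜 ∅ := ((Finset.mem_filter.1 hG).2).1
      have h1 : Finset.Icc 1 r ∈ 𝒜 := by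
        refine hpg.2 _ (mem_chooseFam.2 ⟨Finset.Icc_subset_Icc_right hrn, ?_⟩)
          (Finset.empty_subset _)
        rw [Nat.card_Icc]; omega
      have h2 : Finset.Icc (r + 1) (2 * r) ∈ 𝒜 := by
        refine hpg.2 _ (mem_chooseFam.2 ⟨Finset.Icc_subset_Icc (by omega) hn2r, ?_⟩)
          (Finset.empty_subset _)
        rw [Nat.card_Icc]; omega
      obtain ⟨y, hy⟩ := hint _ h1 _ h2
      rw [Finset.mem_inter, Finset.mem_Icc, Finset.mem_Icc] at hy
      omega
    · have : rankFam n r 𝒜 ∈ {k : ℕ | ∃ G ∈ canonGen n r 𝒜, G.card = k} :=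
        Nat.sInf_mem ⟨G0.card, G0, hG0mem, rfl⟩
      rw [hKe] at this
      exact this
  by_cases hr2 : rankFam n r 𝒜 ≤ 2
  · omega
  exfalso
  push_neg at hr2
  have hr3 : 3 ≤ r := by omega
  -- {1,2} is not a potential generator
  have h12Icc : ({1, 2} : Finset ℕ) ⊆ Finset.Icc 1 n := by
    intro y hy
    rw [Finset.mem_insert, Finset.mem_singleton] at hy
    rw [Finset.mem_Icc]
    omega
  have hnotpg : ¬ PotGen n r 𝒜 {1, 2} := by
    intro hpg
    obtain ⟨G', hG'mem, hG'sub⟩ := exists_canonGen _ hpg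
    have h1 : rankFam n r 𝒜 ≤ G'.card := Nat.sInf_le ⟨G', hG'mem, rfl⟩
    have h2 : G'.card ≤ 2 := le_trans (Finset.card_le_card hG'sub) (by decide)
    omega
  have hA'ex : ∃ A', A' ∈ chooseFam n r ∧ {1, 2} ⊆ A' ∧ A' ∉ 𝒜 := by
    by_contra h
    push_neg at h
    exact hnotpg ⟨h12Icc, fun A hA hs => h A hA hs⟩
  obtain ⟨A', hA'cf, hA'sup, hA'nm⟩ := hA'ex
  obtain ⟨hA'sub, hA'card⟩ := mem_chooseFam.1 hA'cf
  have h1A' : (1 : ℕ) ∈ A' := hA'sup (Finset.mem_insert_self _ _)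
  have h2A' : (2 : ℕ) ∈ A' := hA'sup (by simp)
  have hlA' : (A'.sort (· ≤ ·)).length = r := by rw [Finset.length_sort, hA'card]
  have h0A' : 0 < (A'.sort (· ≤ ·)).length := by omega
  have h1lA' : 1 < (A'.sort (· ≤ ·)).length := by omega
  have hA'0 : (A'.sort (· ≤ ·)).get ⟨0, h0A'⟩ = 1 := by
    have h1 := sort_get_zero_le h1A' h0A'
    have h2 := one_le_sort_get hA'sub h0A'
    omega
  have hA'1 : (A'.sort (· ≤ ·)).get ⟨1, h1lA'⟩ ≤ 2 := by
    apply sort_get_one_le h2A' h1lA'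
    rw [hA'0]
    omega
  -- the dominance down-closure of A'
  set 𝒞 : Finset (Finset ℕ) := (chooseFam n r).filter (fun C => DomLE C A') with h𝒞
  have h𝒞mem : ∀ C ∈ 𝒞, 1 ∈ C ∧ 2 ∈ C := by
    intro C hC
    obtain ⟨hCcf, hCdom⟩ := Finset.mem_filter.1 hC
    obtain ⟨hCsub, hCcard⟩ := mem_chooseFam.1 hCcf
    have hlC : (C.sort (· ≤ ·)).length = r := by rw [Finset.length_sort, hCcard]
    have h0C : 0 < (C.sort (· ≤ ·)).length := by omega
    have h1C : 1 < (C.sort (· ≤ ·)).length := by omega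
    have e0 : (C.sort (· ≤ ·)).get ⟨0, h0C⟩ = 1 := by
      have hu := hCdom.2 0 h0C h0A'
      rw [hA'0] at hu
      have hl := one_le_sort_get hCsub h0C
      omega
    have e1 : (C.sort (· ≤ ·)).get ⟨1, h1C⟩ = 2 := by
      have hu := le_trans (hCdom.2 1 h1C h1lA') hA'1
      have hlt := sort_get_lt C h0C h1C (by omega)
      rw [e0] at hlt
      omega
    constructor
    · rw [← e0]; exact sort_get_mem C h0C
    · rw [← e1]; exact sort_get_mem C h1C
  -- 𝒜 ∪ 𝒞 cannot be intersecting
  have hBint : ¬ IntersectingFam (𝒜 ∪ 𝒞) := by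
    intro hi2
    have heq : 𝒜 ∪ 𝒞 = 𝒜 := by
      apply hmax
      · refine ⟨?_, hi2, ?_⟩
        · intro A hA
          rcases Finset.mem_union.1 hA with h | h
          · exact hsub h
          · exact (Finset.mem_filter.1 h).1
        · intro A hA B hBcf hdom
          rcases Finset.mem_union.1 hA with h | h
          · exact Finset.mem_union_left _ (hlc A h B hBcf hdom)
          · exact Finset.mem_union_right _
              (Finset.mem_filter.2 ⟨hBcf, domle_trans hdom (Finset.mem_filter.1 h).2⟩)
      · exact Finset.subset_union_left
    have hA'B : A' ∈ 𝒜 ∪ 𝒞 :=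
      Finset.mem_union_right _ (Finset.mem_filter.2 ⟨hA'cf, domle_refl A'⟩)
    rw [heq] at hA'B
    exact hA'nm hA'B
  rw [IntersectingFam] at hBint
  push_neg at hBint
  obtain ⟨P, hP, Q, hQ, hPQ⟩ := hBint
  have hPQ' : P ∩ Q = ∅ := hPQ
  have hdisj : ∀ y, y ∈ P → y ∈ Q → False := by
    intro y h1 h2
    have : y ∈ P ∩ Q := Finset.mem_inter.2 ⟨h1, h2⟩
    rw [hPQ'] at this
    exact Finset.notMem_empty y this
  have hB1ex : ∃ B1, B1 ∈ 𝒜 ∧ 1 ∉ B1 ∧ 2 ∉ B1 := by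
    rcases Finset.mem_union.1 hP with hP𝒜 | hP𝒞 <;> rcases Finset.mem_union.1 hQ with hQ𝒜 | hQ𝒞
    · obtain ⟨y, hy⟩ := hint P hP𝒜 Q hQ𝒜
      rw [hPQ'] at hy
      exact absurd hy (Finset.notMem_empty y)
    · exact ⟨P, hP𝒜, fun h => hdisj 1 h (h𝒞mem Q hQ𝒞).1, fun h => hdisj 2 h (h𝒞mem Q hQ𝒞).2⟩
    · exact ⟨Q, hQ𝒜, fun h => hdisj 1 (h𝒞mem P hP𝒞).1 h, fun h => hdisj 2 (h𝒞mem P hP𝒞).2 h⟩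
    · exact absurd (hdisj 1 (h𝒞mem P hP𝒞).1 (h𝒞mem Q hQ𝒞).1) (by simp)
  obtain ⟨B1, hB1mem, h1B1, h2B1⟩ := hB1ex
  obtain ⟨hB1sub, hB1card⟩ := mem_chooseFam.1 (hsub hB1mem)
  -- every member of 𝒜 has its third smallest element at most 2r+3
  have hthird : ∀ A ∈ 𝒜, ∀ h2i : 2 < (A.sort (· ≤ ·)).length,
      (A.sort (· ≤ ·)).get ⟨2, h2i⟩ ≤ 2 * r + 3 := by
    intro A hA h2i
    by_contra hgt
    push_neg at hgt
    obtain ⟨hAsub, hAcard⟩ := mem_chooseFam.1 (hsub hA)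
    have htail : r - 2 ≤ ((Finset.Icc 3 (2 * r + 3)) \ B1).card := by
      have h1 := Finset.le_card_sdiff B1 (Finset.Icc 3 (2 * r + 3))
      rw [Nat.card_Icc, hB1card] at h1
      omega
    obtain ⟨T, hTsub, hTcard⟩ := Finset.exists_subset_card_eq htail
    have hT3 : ∀ t ∈ T, (3 ≤ t ∧ t ≤ 2 * r + 3) ∧ t ∉ B1 := by
      intro t ht
      have := hTsub ht
      rw [Finset.mem_sdiff, Finset.mem_Icc] at this
      exact this
    have h2T : (2 : ℕ) ∉ T := fun h => by have := hT3 2 h; omega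
    have h1T : (1 : ℕ) ∉ insert 2 T := by
      rw [Finset.mem_insert]
      rintro (h | h)
      · omega
      · have := hT3 1 h; omega
    set C := insert 1 (insert 2 T) with hCdef
    have hCcard : C.card = r := by
      rw [hCdef, Finset.card_insert_of_notMem h1T, Finset.card_insert_of_notMem h2T, hTcard]
      omega
    have hCmem : ∀ y ∈ C, y = 1 ∨ y = 2 ∨ y ∈ T := by
      intro y hy
      rw [hCdef, Finset.mem_insert, Finset.mem_insert] at hy
      exact hy
    have hCsub : C ⊆ Finset.Icc 1 n := by
      intro y hy
      rcases hCmem y hy with rfl | rfl | hyT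
      · rw [Finset.mem_Icc]; omega
      · rw [Finset.mem_Icc]; omega
      · have := (hT3 y hyT).1; rw [Finset.mem_Icc]; omega
    have hCcf : C ∈ chooseFam n r := mem_chooseFam.2 ⟨hCsub, hCcard⟩
    have h1C : (1 : ℕ) ∈ C := Finset.mem_insert_self _ _
    have h2C : (2 : ℕ) ∈ C := Finset.mem_insert_of_mem (Finset.mem_insert_self _ _)
    have hCB1 : ∀ y, y ∈ C → y ∈ B1 → False := by
      intro y hyC hyB
      rcases hCmem y hyC with rfl | rfl | hyT
      · exact h1B1 hyB
      · exact h2B1 hyB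
      · exact (hT3 y hyT).2 hyB
    have hlC : (C.sort (· ≤ ·)).length = r := by rw [Finset.length_sort, hCcard]
    have hlA : (A.sort (· ≤ ·)).length = r := by rw [Finset.length_sort, hAcard]
    have hdom : DomLE C A := by
      refine ⟨by rw [hCcard, hAcard], ?_⟩
      intro i hBi hAi
      have hA1le : 1 ≤ (A.sort (· ≤ ·)).get ⟨i, hAi⟩ := one_le_sort_get hAsub hAi
      match i, hBi, hAi with
      | 0, hBi, hAi =>
        have h1 : (C.sort (· ≤ ·)).get ⟨0, hBi⟩ ≤ 1 := sort_get_zero_le h1C hBi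
        omega
      | 1, hBi, hAi =>
        have h0C : 0 < (C.sort (· ≤ ·)).length := by omega
        have hCle : (C.sort (· ≤ ·)).get ⟨1, hBi⟩ ≤ 2 := by
          apply sort_get_one_le h2C hBi
          have := sort_get_zero_le h1C h0C
          omega
        have h0A : 0 < (A.sort (· ≤ ·)).length := by omega
        have hAge : 2 ≤ (A.sort (· ≤ ·)).get ⟨1, hAi⟩ := by
          have hlt := sort_get_lt A h0A hAi (by omega)
          have hge := one_le_sort_get hAsub h0A
          omega
        omega
      | (k + 2), hBi, hAi =>
        have hCel : (C.sort (· ≤ ·)).get ⟨k + 2, hBi⟩ ≤ 2 * r + 3 := by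
          have hmem := sort_get_mem C hBi
          rcases hCmem _ hmem with h | h | h
          · omega
          · omega
          · have := (hT3 _ h).1; omega
        have hAge : 2 * r + 3 < (A.sort (· ≤ ·)).get ⟨k + 2, hAi⟩ := by
          have hle := sort_get_le A h2i hAi (by omega)
          omega
        omega
    have hC𝒜 : C ∈ 𝒜 := hlc A hA C hCcf hdom
    obtain ⟨y, hy⟩ := hint C hC𝒜 B1 hB1mem
    rw [Finset.mem_inter] at hy
    exact hCB1 y hy.1 hy.2
  -- counting: 𝒜 is small
  set M := 2 * r + 3 with hMdef
  have hcount : 𝒜.card ≤ M.choose 3 * (n - 3).choose (r - 3) := by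
    have hsubB : 𝒜 ⊆ (Finset.powersetCard 3 (Finset.Icc 1 M)).biUnion
        (fun T => (chooseFam n r).filter (fun A => T ⊆ A)) := by
      intro A hA
      obtain ⟨hAsub, hAcard⟩ := mem_chooseFam.1 (hsub hA)
      have hlA : (A.sort (· ≤ ·)).length = r := by rw [Finset.length_sort, hAcard]
      have h0 : 0 < (A.sort (· ≤ ·)).length := by omega
      have h1 : 1 < (A.sort (· ≤ ·)).length := by omega
      have h2 : 2 < (A.sort (· ≤ ·)).length := by omega
      set a0 := (A.sort (· ≤ ·)).get ⟨0, h0⟩ with ha0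
      set a1 := (A.sort (· ≤ ·)).get ⟨1, h1⟩ with ha1
      set a2 := (A.sort (· ≤ ·)).get ⟨2, h2⟩ with ha2
      have h01 : a0 < a1 := sort_get_lt A h0 h1 (by omega)
      have h12 : a1 < a2 := sort_get_lt A h1 h2 (by omega)
      have ha2M : a2 ≤ M := hthird A hA h2
      have ha01 : 1 ≤ a0 := one_le_sort_get hAsub h0
      refine Finset.mem_biUnion.2 ⟨{a0, a1, a2}, ?_, ?_⟩
      · refine Finset.mem_powersetCard.2 ⟨?_, ?_⟩
        · intro y hy
          rw [Finset.mem_insert, Finset.mem_insert, Finset.mem_singleton] at hy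
          rcases hy with rfl | rfl | rfl <;> (rw [Finset.mem_Icc]; omega)
        · rw [Finset.card_insert_of_notMem (by
              rw [Finset.mem_insert, Finset.mem_singleton]; omega),
            Finset.card_insert_of_notMem (by rw [Finset.mem_singleton]; omega),
            Finset.card_singleton]
      · refine Finset.mem_filter.2 ⟨hsub hA, ?_⟩
        intro y hy
        rw [Finset.mem_insert, Finset.mem_insert, Finset.mem_singleton] at hy
        rcases hy with rfl | rfl | rfl
        · exact sort_get_mem A h0
        · exact sort_get_mem A h1
        · exact sort_get_mem A h2
    calc 𝒜.card ≤ ((Finset.powersetCard 3 (Finset.Icc 1 M)).biUnion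
        (fun T => (chooseFam n r).filter (fun A => T ⊆ A))).card := Finset.card_le_card hsubB
      _ ≤ ∑ T ∈ Finset.powersetCard 3 (Finset.Icc 1 M),
            ((chooseFam n r).filter (fun A => T ⊆ A)).card := Finset.card_biUnion_le
      _ ≤ ∑ _T ∈ Finset.powersetCard 3 (Finset.Icc 1 M), (n - 3).choose (r - 3) := by
          apply Finset.sum_le_sum
          intro T hT
          obtain ⟨hTsub, hTcard⟩ := Finset.mem_powersetCard.1 hT
          exact filter_superset_card_le
            (hTsub.trans (Finset.Icc_subset_Icc_right (by omega))) hTcard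
      _ = (Finset.powersetCard 3 (Finset.Icc 1 M)).card * (n - 3).choose (r - 3) := by
          rw [Finset.sum_const, smul_eq_mul]
      _ = M.choose 3 * (n - 3).choose (r - 3) := by
          rw [Finset.card_powersetCard, Nat.card_Icc]
          have e : M + 1 - 1 = M := by omega
          rw [e]
  -- the star beats 𝒜, contradiction with optimality
  have hhit : hit X 𝒜 ≤ 𝒜.card := Finset.card_filter_le _ _
  have hstarle := hbest (starFam n r) hstar
  have hstarlb := star_hit_lb (by omega) hrn hX hXne
  have hkey : (n - 2).choose (r - 2) ≤ M.choose 3 * (n - 3).choose (r - 3) := by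
    calc (n - 2).choose (r - 2) ≤ hit X (starFam n r) := hstarlb
      _ ≤ hit X 𝒜 := hstarle
      _ ≤ 𝒜.card := hhit
      _ ≤ M.choose 3 * (n - 3).choose (r - 3) := hcount
  have hpos : 0 < (n - 3).choose (r - 3) := Nat.choose_pos (by omega)
  have hid : (n - 2) * (n - 3).choose (r - 3) = (n - 2).choose (r - 2) * (r - 2) := by
    have h := Nat.add_one_mul_choose_eq (n - 3) (r - 3)
    have e1 : n - 3 + 1 = n - 2 := by omega
    have e2 : r - 3 + 1 = r - 2 := by omega
    rw [e1, e2] at h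
    exact h
  have hmul : (n - 2) * (n - 3).choose (r - 3)
      ≤ (M.choose 3 * (r - 2)) * (n - 3).choose (r - 3) := by
    rw [hid]
    calc (n - 2).choose (r - 2) * (r - 2)
        ≤ (M.choose 3 * (n - 3).choose (r - 3)) * (r - 2) := Nat.mul_le_mul_right _ hkey
      _ = (M.choose 3 * (r - 2)) * (n - 3).choose (r - 3) := by ring
  have hfin : n - 2 ≤ M.choose 3 * (r - 2) := Nat.le_of_mul_le_mul_right hmul hpos
  have hcle : M.choose 3 ≤ M ^ 3 := Nat.choose_le_pow M 3
  have hA : M.choose 3 * (r - 2) ≤ M ^ 3 * (r - 2) := Nat.mul_le_mul_right _ hcle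
  have hB : M ^ 3 * (r - 2) + M ^ 3 ≤ M ^ 3 * M := by
    rw [← Nat.mul_succ]
    exact Nat.mul_le_mul_left _ (by omega)
  have hC : M ^ 3 * M = M ^ 4 := by ring
  have hD : M ^ 4 ≤ n := hn
  have hE : 729 ≤ M ^ 3 := by
    calc (729 : ℕ) = 9 ^ 3 := by norm_num
      _ ≤ M ^ 3 := Nat.pow_le_pow_left (by omega) 3
  omega
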